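/- Let T_i = T(ℓ_i, s_i) and T_j = T(ℓ_j, s_j) with delay indices ℓ_i, ℓ_j ∈ {0,…,M−1} and real Doppler exponents s_i, s_j. Then the product T_i·T_j^† is supported on a single cyclic diagonal modulo M: for all u, v ∈ {0,…,MN−1}, if v ≢ u + ℓ_j − ℓ_i (mod M) then [T_i T_j^†]_{(u,v)} = 0 (support structure established in the proof of Lemma 2). -/

import Mathlib

open Matrix

noncomputable section

/-- Entry of the `N`-point unitary DFT matrix, written with natural-number indices:
`(F_N)_{a,b} = (1/√N) exp(-2πi a b / N)`. -/
def dftEntry (N a b : ℕ) : ℂ :=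
  (((Real.sqrt N)⁻¹ : ℝ) : ℂ) *
    Complex.exp (-(2 * Real.pi * Complex.I) * (a : ℂ) * (b : ℂ) / (N : ℂ))

/-- The Kronecker product `F_N ⊗ I_M`, realised on `Fin (M*N)` via the
correspondence `u ↔ (u / M, u % M)` (index `u` encodes the pair
`(a,b) = (u / M, u % M)` as `u = a·M + b`). -/
def FkronI (M N : ℕ) : Matrix (Fin (M * N)) (Fin (M * N)) ℂ :=
  Matrix.of fun u v =>
    if (u : ℕ) % M = (v : ℕ) % M then dftEntry N ((u : ℕ) / M) ((v : ℕ) / M) else 0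

/-- The cyclic-shift permutation matrix `Π` of size `K`:
`Π_{u,v} = 1` iff `u ≡ v + 1 (mod K)`. -/
def cyclicShift (K : ℕ) : Matrix (Fin K) (Fin K) ℂ :=
  Matrix.of fun u v => if ((v : ℕ) + 1) % K = (u : ℕ) then 1 else 0

/-- The diagonal matrix `Δ^s` of size `K`, with `(Δ^s)_{j,j} = exp(2πi s j / K)`. -/
def deltaPow (K : ℕ) (s : ℝ) : Matrix (Fin K) (Fin K) ℂ :=
  Matrix.diagonal fun j => Complex.exp (2 * Real.pi * Complex.I * (s : ℂ) * ((j : ℕ) : ℂ) / (K : ℂ))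

/-- The OTFS delay–Doppler matrix `T(ℓ,s) = (F_N ⊗ I_M) Π^ℓ Δ^s (F_N^† ⊗ I_M)`. -/
def Tmat (M N : ℕ) (ℓ : ℕ) (s : ℝ) : Matrix (Fin (M * N)) (Fin (M * N)) ℂ :=
  FkronI M N * (cyclicShift (M * N)) ^ ℓ * deltaPow (M * N) s * (FkronI M N)ᴴ

lemma cyclicShift_pow_apply (K ℓ : ℕ) (u v : Fin K) :
    ((cyclicShift K) ^ ℓ) u v = if ((v : ℕ) + ℓ) % K = (u : ℕ) then 1 else 0 := by
  induction ℓ generalizing v with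
  | zero =>
    simp [pow_zero, Matrix.one_apply, Nat.mod_eq_of_lt v.isLt, Fin.ext_iff, eq_comm]
  | succ n ih =>
    rw [pow_succ, Matrix.mul_apply]
    set w0 : Fin K := ⟨((v : ℕ) + 1) % K, Nat.mod_lt _ v.pos⟩ with hw0
    rw [Finset.sum_eq_single w0]
    · rw [ih w0]
      have h1 : cyclicShift K w0 v = 1 := by simp [cyclicShift, hw0]
      rw [h1, mul_one]
      have : ((w0 : ℕ) + n) % K = ((v : ℕ) + (n + 1)) % K := by
        simp only [hw0]
        rw [Nat.mod_add_mod]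
        ring_nf
      rw [this]
    · intro w _ hw
      have : cyclicShift K w v = 0 := by
        simp only [cyclicShift, Matrix.of_apply, ite_eq_right_iff]
        intro h
        exact absurd (Fin.ext (by simp [hw0, ← h]) : w = w0) hw
      rw [this, mul_zero]
    · intro h; exact absurd (Finset.mem_univ w0) h

-- cast of `x % K` to `ZMod M` when `M ∣ K`
lemma natCast_mod_of_dvd (M K x : ℕ) (h : M ∣ K) :
    ((x % K : ℕ) : ZMod M) = (x : ZMod M) := by
  conv_rhs => rw [← Nat.div_add_mod x K]
  push_cast
  obtain ⟨c, rfl⟩ := h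
  push_cast
  simp [ZMod.natCast_self]

lemma Tmat_support (M N : ℕ) (ℓ : ℕ) (s : ℝ) (u v : Fin (M * N))
    (h : ((u : ℕ) : ZMod M) ≠ ((v : ℕ) : ZMod M) + (ℓ : ZMod M)) :
    Tmat M N ℓ s u v = 0 := by
  have hdvd : M ∣ M * N := ⟨N, rfl⟩
  have key : ∀ x : Fin (M * N), (((x : ℕ) % M : ℕ) : ZMod M) = ((x : ℕ) : ZMod M) := by
    intro x; exact ZMod.natCast_mod _ _
  unfold Tmat
  rw [Matrix.mul_apply]
  apply Finset.sum_eq_zero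
  intro c _
  rw [Matrix.mul_apply]
  rw [Finset.sum_mul]
  apply Finset.sum_eq_zero
  intro b _
  rw [Matrix.mul_apply, Finset.sum_mul, Finset.sum_mul]
  apply Finset.sum_eq_zero
  intro a _
  by_contra hne
  -- each factor nonzero
  have hF : FkronI M N u a ≠ 0 := fun h0 => hne (by simp [h0])
  have hP : ((cyclicShift (M * N)) ^ ℓ) a b ≠ 0 := fun h0 => hne (by simp [h0])
  have hD : deltaPow (M * N) s b c ≠ 0 := fun h0 => hne (by simp [h0])
  have hB : FkronI M N v c ≠ 0 := fun h0 => hne (by simp [Matrix.conjTranspose_apply, h0])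
  have h1 : (u : ℕ) % M = (a : ℕ) % M := by
    by_contra hc; exact hF (by simp [FkronI, hc])
  have h2 : ((b : ℕ) + ℓ) % (M * N) = (a : ℕ) := by
    rw [cyclicShift_pow_apply] at hP
    by_contra hc; exact hP (by simp [hc])
  have h3 : b = c := by
    by_contra hc; exact hD (by simp [deltaPow, Matrix.diagonal_apply_ne _ hc])
  have h4 : (v : ℕ) % M = (c : ℕ) % M := by
    by_contra hc
    exact hB (by simp [FkronI, hc])
  apply h
  calc ((u : ℕ) : ZMod M) = (((u : ℕ) % M : ℕ) : ZMod M) := (ZMod.natCast_mod _ _).symm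
    _ = (((a : ℕ) % M : ℕ) : ZMod M) := by rw [h1]
    _ = ((a : ℕ) : ZMod M) := ZMod.natCast_mod _ _
    _ = ((((b : ℕ) + ℓ) % (M * N) : ℕ) : ZMod M) := by rw [h2]
    _ = (((b : ℕ) + ℓ : ℕ) : ZMod M) := natCast_mod_of_dvd M (M * N) _ hdvd
    _ = ((b : ℕ) : ZMod M) + (ℓ : ZMod M) := by push_cast; ring
    _ = ((c : ℕ) : ZMod M) + (ℓ : ZMod M) := by rw [h3]
    _ = (((c : ℕ) % M : ℕ) : ZMod M) + (ℓ : ZMod M) := by rw [ZMod.natCast_mod]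
    _ = (((v : ℕ) % M : ℕ) : ZMod M) + (ℓ : ZMod M) := by rw [← h4]
    _ = ((v : ℕ) : ZMod M) + (ℓ : ZMod M) := by rw [ZMod.natCast_mod]


/-- Support structure from the proof of Lemma 2: `T(ℓᵢ,sᵢ)·T(ℓⱼ,sⱼ)^†` is supported
on the single cyclic diagonal `v ≡ u + ℓⱼ - ℓᵢ (mod M)`; every entry off this
diagonal vanishes. -/
theorem Tmat_mul_conjTranspose_support (M N : ℕ) (hM : 0 < M) (hN : 0 < N)
    (ℓi ℓj : ℕ) (hℓi : ℓi < M) (hℓj : ℓj < M) (si sj : ℝ) :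
    ∀ u v : Fin (M * N),
      (((v : ℕ) : ZMod M) ≠ ((u : ℕ) : ZMod M) + (ℓj : ZMod M) - (ℓi : ZMod M)) →
      (Tmat M N ℓi si * (Tmat M N ℓj sj)ᴴ) u v = 0 := by
  intro u v h
  rw [Matrix.mul_apply]
  apply Finset.sum_eq_zero
  intro w _
  rw [Matrix.conjTranspose_apply]
  by_cases h1 : ((u : ℕ) : ZMod M) = ((w : ℕ) : ZMod M) + (ℓi : ZMod M)
  · by_cases h2 : ((v : ℕ) : ZMod M) = ((w : ℕ) : ZMod M) + (ℓj : ZMod M)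
    · exfalso; apply h; rw [h2, h1]; ring
    · rw [Tmat_support M N ℓj sj v w h2, star_zero, mul_zero]
  · rw [Tmat_support M N ℓi si u w h1, zero_mul]

end
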